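/- Let m ≥ 1, 1 ≤ L ≤ m, let the ground type be Option (Fin (2*m − L)) with r = none the reference symbol and the elements some i the players, and let s : ℝ. Suppose S : Finset (Option (Fin (2*m − L))) → ℝ satisfies: S {some i} = s for every player i; S {r} = L · s; subadditivity, S (X ∪ Y) ≤ S X + S Y for disjoint X, Y; the Araki–Lieb inequality, S (X ∪ Y) ≥ S X − S Y for disjoint X, Y; S (A ∪ {r}) = S A − L·s for every set A of players with |A| ≥ m; and S (B ∪ {r}) = S B + L·s for every set B of players with |B| ≤ m − L. Then for all disjoint sets B and C of players with |B| = m − L and |C| = L, one has S (B ∪ C) = S B + L · s, and moreover S C = L · s for every set C of L players. (This is the key intermediate step in the proof of the ramp QSS theorem: adding L shares to m−L shares increases the entropy maximally.) -/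

import Mathlib

/-- **Key step of the ramp QSS → maximal entanglement direction.**
The ground type is `Option (Fin (2*m − L))`: the `2m−L` players are `some i`, and
`none` is the reference symbol `r` (carrying the `L` reference qudits).  If the
entropy function `S` satisfies subadditivity, Araki–Lieb, `S {some i} = s`,
`S {r} = L·s`, and the authorized/forbidden conditions of a `(m, L, 2m−L)` ramp
QSS scheme, then adding any `L` shares `C` to any `m−L` shares `B` increases the
entropy maximally, `S (B ∪ C) = S B + L·s`, and moreover every set `C` of `L`
shares has entropy `S C = L·s`. -/
theorem ramp_qss_add_L_shares_maximal (m L : ℕ)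
    (hm : 1 ≤ m) (hL : 1 ≤ L) (hLm : L ≤ m) (s : ℝ)
    (S : Finset (Option (Fin (2 * m - L))) → ℝ)
    (hsingle : ∀ i : Fin (2 * m - L), S {some i} = s)
    (href : S {none} = (L : ℝ) * s)
    (hsubadd : ∀ X Y : Finset (Option (Fin (2 * m - L))), Disjoint X Y →
      S (X ∪ Y) ≤ S X + S Y)
    (hAL : ∀ X Y : Finset (Option (Fin (2 * m - L))), Disjoint X Y →
      S X - S Y ≤ S (X ∪ Y))
    (hauth : ∀ A : Finset (Option (Fin (2 * m - L))), none ∉ A → m ≤ A.card →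
      S (A ∪ {none}) = S A - (L : ℝ) * s)
    (hforb : ∀ B : Finset (Option (Fin (2 * m - L))), none ∉ B → B.card ≤ m - L →
      S (B ∪ {none}) = S B + (L : ℝ) * s) :
    (∀ B C : Finset (Option (Fin (2 * m - L))), none ∉ B → none ∉ C →
      Disjoint B C → B.card = m - L → C.card = L →
      S (B ∪ C) = S B + (L : ℝ) * s) ∧
    (∀ C : Finset (Option (Fin (2 * m - L))), none ∉ C → C.card = L →
      S C = (L : ℝ) * s) := by
  -- upper bound: S C ≤ |C| * s for nonempty sets of players
  have hub : ∀ C : Finset (Option (Fin (2 * m - L))), C.Nonempty → none ∉ C →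
      S C ≤ (C.card : ℝ) * s := by
    intro C
    induction C using Finset.cons_induction with
    | empty => intro h; exact absurd h (by simp)
    | cons a t ha ih =>
      intro _ hnone
      have hanone : a ≠ none := fun h => hnone (by simp [h])
      obtain ⟨i, rfl⟩ := Option.ne_none_iff_exists'.mp hanone
      by_cases ht : t = ∅
      · subst ht; simp [hsingle i]
      · have htne : t.Nonempty := Finset.nonempty_of_ne_empty ht
        have htnone : none ∉ t := fun h => hnone (Finset.mem_cons_of_mem h)
        have hle := ih htne htnone
        have hd : Disjoint ({some i} : Finset (Option (Fin (2 * m - L)))) t := by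
          simpa using ha
        have := hsubadd {some i} t hd
        have hcons : (Finset.cons (some i) t ha) = {some i} ∪ t := by
          rw [Finset.cons_eq_insert, Finset.insert_eq]
        rw [hcons, Finset.card_union_of_disjoint hd]
        calc S ({some i} ∪ t) ≤ S {some i} + S t := this
          _ ≤ s + (t.card : ℝ) * s := by rw [hsingle i]; linarith
          _ = ((({some i} : Finset (Option (Fin (2 * m - L)))).card + t.card : ℕ) : ℝ) * s := by
              simp; push_cast; ring
  have key : ∀ B C : Finset (Option (Fin (2 * m - L))), none ∉ B → none ∉ C →
      Disjoint B C → B.card = m - L → C.card = L →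
      S (B ∪ C) = S B + (L : ℝ) * s ∧ S C = (L : ℝ) * s := by
    intro B C hB hC hd hBc hCc
    have hBCn : none ∉ B ∪ C := by simp [hB, hC]
    have hcard : (B ∪ C).card = m := by
      rw [Finset.card_union_of_disjoint hd, hBc, hCc]; omega
    have h1 := hauth (B ∪ C) hBCn (le_of_eq hcard.symm)
    have h2 := hforb B hB (le_of_eq hBc)
    have hdn : Disjoint (B ∪ {none}) C := by
      rw [Finset.disjoint_union_left]
      exact ⟨hd, by simpa using hC⟩
    have h3 := hAL (B ∪ {none}) C hdn
    have hre : (B ∪ {none}) ∪ C = (B ∪ C) ∪ {none} := by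
      rw [Finset.union_right_comm]
    rw [hre] at h3
    have hCne : C.Nonempty := Finset.card_pos.mp (by omega)
    have hCub : S C ≤ (L : ℝ) * s := by
      have := hub C hCne hC
      rwa [hCc] at this
    have h4 := hsubadd B C hd
    constructor <;> linarith
  refine ⟨fun B C hB hC hd hBc hCc => (key B C hB hC hd hBc hCc).1, ?_⟩
  intro C hC hCc
  set A : Finset (Option (Fin (2 * m - L))) :=
    (Finset.univ : Finset (Fin (2 * m - L))).image some \ C with hA
  have hCsub : C ⊆ (Finset.univ : Finset (Fin (2 * m - L))).image some := by
    intro x hx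
    match x with
    | none => exact absurd hx hC
    | some i => simp
  have hAcard : A.card = 2 * m - L - L := by
    rw [hA, Finset.card_sdiff_of_subset hCsub, Finset.card_image_of_injective _ (Option.some_injective _),
      Finset.card_univ, Fintype.card_fin, hCc]
  have hBig : m - L ≤ A.card := by omega
  obtain ⟨B, hBsub, hBcard⟩ := Finset.exists_subset_card_eq hBig
  have hBnone : none ∉ B := by
    intro h
    have := hBsub h
    rw [hA] at this
    simp at this
  have hdisj : Disjoint B C :=
    Finset.disjoint_of_subset_left hBsub (Finset.sdiff_disjoint)
  exact (key B C hBnone hC hdisj hBcard hCc).2
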